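/- Let n be odd and N = (n-1)/2. Define N×N matrices T_1,…,T_N by [T_m]_{j,k} = x_{m,j-k} - x_{m,j+k}, where x_{m,a} = 1 if a ≡ ±m (mod n) and 0 otherwise. Then each T_m vanishes on the main diagonal except at position (d_m, d_m) where d_m ∈ {1,…,N} satisfies 2d_m ≡ ±m (mod n); consequently T_1, …, T_N are linearly independent. -/
import Mathlib

/-- `x_{m,a} = 1` if `a ≡ ±m (mod n)`, and `0` otherwise. -/
def xInd (n : ℕ) (m : ℕ) (a : ℤ) : ℝ :=
  if (a : ZMod n) = (m : ZMod n) ∨ (a : ZMod n) = -(m : ZMod n) then 1 else 0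

/-- The matrix `T_m` with `[T_m]_{j,k} = x_{m,j-k} - x_{m,j+k}`, indices `1 ≤ j,k ≤ N`. -/
def Tmat (n N m : ℕ) : Matrix (Fin N) (Fin N) ℝ :=
  fun j k => xInd n m ((j.val : ℤ) + 1 - ((k.val : ℤ) + 1))
    - xInd n m ((j.val : ℤ) + 1 + ((k.val : ℤ) + 1))

lemma aux_ne_zero (n a : ℕ) (h1 : 1 ≤ a) (h2 : a < n) : ((a : ZMod n) ≠ 0) := by
  haveI : NeZero n := ⟨by omega⟩
  intro h
  have hd := (ZMod.natCast_eq_zero_iff _ _).mp h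
  have := Nat.le_of_dvd (by omega) hd
  omega

/-- rigidity: residues of small naturals determine them -/
lemma aux_rigid (n a b : ℕ) (ha1 : 1 ≤ a) (ha2 : a < n) (hb1 : 1 ≤ b) (hb2 : b < n)
    (h : (a : ZMod n) = b ∨ (a : ZMod n) = -b) : a = b ∨ a + b = n := by
  haveI : NeZero n := ⟨by omega⟩
  rcases h with h | h
  · left
    have := congrArg ZMod.val h
    rwa [ZMod.val_cast_of_lt ha2, ZMod.val_cast_of_lt hb2] at this
  · right
    have h0 : ((a + b : ℕ) : ZMod n) = 0 := by
      push_cast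
      rw [h]; ring
    have hd : n ∣ a + b := (ZMod.natCast_eq_zero_iff _ _).mp h0
    rcases hd with ⟨k, hk⟩
    have hk2 : k ≤ 1 := by
      by_contra hc
      push_neg at hc
      have : n * 2 ≤ n * k := Nat.mul_le_mul_left n hc
      omega
    interval_cases k <;> omega

lemma Tmat_diag (n m N : ℕ) (hm1 : 1 ≤ m) (hm : m < n) (j : Fin N) :
    Tmat n N m j j =
      if ((2 * (j.val + 1) : ℕ) : ZMod n) = (m : ZMod n) ∨
         ((2 * (j.val + 1) : ℕ) : ZMod n) = -(m : ZMod n) then -1 else 0 := by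
  have hmz : (m : ZMod n) ≠ 0 := aux_ne_zero n m hm1 hm
  unfold Tmat xInd
  have h0 : ((j.val : ℤ) + 1 - ((j.val : ℤ) + 1)) = 0 := by ring
  have h1 : (((j.val : ℤ) + 1 + ((j.val : ℤ) + 1) : ℤ) : ZMod n)
      = ((2 * (j.val + 1) : ℕ) : ZMod n) := by push_cast; ring
  rw [h0, h1]
  have hz : ¬ (((0:ℤ) : ZMod n) = (m : ZMod n) ∨ ((0:ℤ) : ZMod n) = -(m : ZMod n)) := by
    push_cast
    rintro (h | h)
    · exact hmz h.symm
    · exact hmz (by rw [← neg_neg (m : ZMod n), ← h]; ring)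
  rw [if_neg hz]
  split <;> ring

lemma aux_exists_d (n : ℕ) (hodd : Odd n) (hn : 3 ≤ n) (m : ℕ) (hm1 : 1 ≤ m)
    (hm2 : m ≤ (n - 1) / 2) :
    ∃ d : Fin ((n - 1) / 2),
      ((2 * (d.val + 1) : ℕ) : ZMod n) = (m : ZMod n) ∨
      ((2 * (d.val + 1) : ℕ) : ZMod n) = -(m : ZMod n) := by
  obtain ⟨t, ht⟩ := hodd
  set N := (n - 1) / 2 with hN
  have h2N : 2 * N + 1 = n := by omega
  rcases Nat.even_or_odd m with ⟨s, hs⟩ | ⟨s, hs⟩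
  · -- m = 2s, d.val + 1 = s
    refine ⟨⟨s - 1, by omega⟩, Or.inl ?_⟩
    have : 2 * (s - 1 + 1) = m := by omega
    rw [this]
  · -- m = 2s+1, take d.val + 1 = (n - m)/2
    have hnm : 2 * (t - s) = n - m := by omega
    refine ⟨⟨t - s - 1, by omega⟩, Or.inr ?_⟩
    have h1 : 2 * (t - s - 1 + 1) = n - m := by omega
    rw [h1]
    have h2 : ((n - m : ℕ) : ZMod n) + (m : ZMod n) = 0 := by
      rw [← Nat.cast_add]
      have : n - m + m = n := by omega
      rw [this, ZMod.natCast_self]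
    linear_combination h2

lemma aux_cond_unique (n : ℕ) (hodd : Odd n) (hn : 3 ≤ n) (m : ℕ) (hm1 : 1 ≤ m)
    (hm2 : m ≤ (n - 1) / 2) (d j : Fin ((n - 1) / 2))
    (hd : ((2 * (d.val + 1) : ℕ) : ZMod n) = (m : ZMod n) ∨
      ((2 * (d.val + 1) : ℕ) : ZMod n) = -(m : ZMod n))
    (hj : ((2 * (j.val + 1) : ℕ) : ZMod n) = (m : ZMod n) ∨
      ((2 * (j.val + 1) : ℕ) : ZMod n) = -(m : ZMod n)) : j = d := by
  obtain ⟨t, ht⟩ := hodd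
  have hNn : 2 * ((n - 1) / 2) + 1 = n := by omega
  have hdn := d.isLt
  have hjn := j.isLt
  have key : ((2 * (j.val + 1) : ℕ) : ZMod n) = ((2 * (d.val + 1) : ℕ) : ZMod n) ∨
      ((2 * (j.val + 1) : ℕ) : ZMod n) = -((2 * (d.val + 1) : ℕ) : ZMod n) := by
    rcases hj with hj | hj <;> rcases hd with hd | hd
    · exact Or.inl (hj.trans hd.symm)
    · exact Or.inr (by linear_combination hj + hd)
    · exact Or.inr (by linear_combination hj + hd)
    · exact Or.inl (hj.trans hd.symm)
  have := aux_rigid n (2 * (j.val + 1)) (2 * (d.val + 1)) (by omega) (by omega)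
    (by omega) (by omega) key
  rcases this with h | h
  · exact Fin.val_inj.mp (by omega)
  · omega

lemma aux_m_unique (n : ℕ) (hodd : Odd n) (hn : 3 ≤ n) (m m' : ℕ) (hm1 : 1 ≤ m)
    (hm2 : m ≤ (n - 1) / 2) (hm1' : 1 ≤ m') (hm2' : m' ≤ (n - 1) / 2)
    (d : Fin ((n - 1) / 2))
    (hd : ((2 * (d.val + 1) : ℕ) : ZMod n) = (m : ZMod n) ∨
      ((2 * (d.val + 1) : ℕ) : ZMod n) = -(m : ZMod n))
    (hd' : ((2 * (d.val + 1) : ℕ) : ZMod n) = (m' : ZMod n) ∨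
      ((2 * (d.val + 1) : ℕ) : ZMod n) = -(m' : ZMod n)) : m = m' := by
  obtain ⟨t, ht⟩ := hodd
  have key : (m : ZMod n) = (m' : ZMod n) ∨ (m : ZMod n) = -(m' : ZMod n) := by
    rcases hd with h | h <;> rcases hd' with h' | h'
    · exact Or.inl (h.symm.trans h')
    · exact Or.inr (by linear_combination h' - h)
    · exact Or.inr (by linear_combination h - h')
    · exact Or.inl (by linear_combination h - h')
  have := aux_rigid n m m' hm1 (by omega) hm1' (by omega) key
  omega

theorem Tmat_diag_and_linearIndependent (n : ℕ) (hodd : Odd n) (hn : 3 ≤ n) :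
    (∀ m : ℕ, 1 ≤ m → m ≤ (n - 1) / 2 →
      ∃ d : Fin ((n - 1) / 2),
        ((2 * ((d.val : ℕ) + 1) : ZMod n) = (m : ZMod n) ∨
         (2 * ((d.val : ℕ) + 1) : ZMod n) = -(m : ZMod n)) ∧
        ∀ j : Fin ((n - 1) / 2), j ≠ d → Tmat n ((n - 1) / 2) m j j = 0)
    ∧ LinearIndependent ℝ (fun m : Fin ((n - 1) / 2) => Tmat n ((n - 1) / 2) (m.val + 1)) := by
  have hcast : ∀ d : Fin ((n - 1) / 2),
      (2 * ((d.val : ZMod n) + 1)) = ((2 * (d.val + 1) : ℕ) : ZMod n) := by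
    intro d; push_cast; ring
  have hNn : 2 * ((n - 1) / 2) + 1 = n := by
    obtain ⟨t, ht⟩ := hodd; omega
  constructor
  · intro m hm1 hm2
    obtain ⟨d, hd⟩ := aux_exists_d n hodd hn m hm1 hm2
    refine ⟨d, ?_, ?_⟩
    · rcases hd with h | h
      · exact Or.inl (by rw [hcast d, h])
      · exact Or.inr (by rw [hcast d, h])
    · intro j hj
      rw [Tmat_diag n m _ hm1 (by omega) j]
      rw [if_neg]
      intro hcond
      exact hj (aux_cond_unique n hodd hn m hm1 hm2 d j hd hcond)
  · rw [Fintype.linearIndependent_iff]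
    intro g hg m
    obtain ⟨d, hd⟩ := aux_exists_d n hodd hn (m.val + 1) (by omega) (by omega)
    have happ : (∑ i : Fin ((n - 1) / 2),
        (g i • Tmat n ((n - 1) / 2) (i.val + 1)) d d) = 0 := by
      have := congrFun (congrFun hg d) d
      simpa [Matrix.sum_apply] using this
    have h1 : ∀ i : Fin ((n - 1) / 2), i ≠ m →
        (g i • Tmat n ((n - 1) / 2) (i.val + 1)) d d = 0 := by
      intro i hi
      have : Tmat n ((n - 1) / 2) (i.val + 1) d d = 0 := by
        rw [Tmat_diag n (i.val + 1) _ (by omega) (by omega) d]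
        rw [if_neg]
        intro hcond
        exact hi (Fin.ext (by
          have := aux_m_unique n hodd hn (i.val + 1) (m.val + 1) (by omega) (by omega)
            (by omega) (by omega) d hcond hd
          omega))
      simp [Matrix.smul_apply, this]
    have h2 : (g m • Tmat n ((n - 1) / 2) (m.val + 1)) d d = -(g m) := by
      have : Tmat n ((n - 1) / 2) (m.val + 1) d d = -1 := by
        rw [Tmat_diag n (m.val + 1) _ (by omega) (by omega) d]
        rw [if_pos hd]
      simp [Matrix.smul_apply, this]
    have hss : (∑ i : Fin ((n - 1) / 2),
        (g i • Tmat n ((n - 1) / 2) (i.val + 1)) d d)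
        = (g m • Tmat n ((n - 1) / 2) (m.val + 1)) d d :=
      Finset.sum_eq_single_of_mem m (Finset.mem_univ m) (fun i _ hi => h1 i hi)
    rw [hss, h2] at happ
    linarith
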